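/- Consider the Newtonian 1+4 coorbital problem (s = 3) with angles satisfying −π/2 < θ₄ < θ₃ < 0 < θ₂ < θ₁ and θ₁ − θ₄ ≤ π (a convex configuration). If the masses satisfy m₁ = m₄ > 0 and m₂ = m₃ > 0 and F m = 0, then θ₁ − θ₂ = θ₃ − θ₄, i.e., the configuration is symmetric with respect to an axis through the central mass. -/

import Mathlib

open Real Matrix

/-- `f_s(θ) = sin(θ)·(2^{-s}|sin(θ/2)|^{-s} − 1)`, the coorbital kernel function
for a homogeneous potential with exponent `s`. -/
noncomputable def coorbitalF (s θ : ℝ) : ℝ :=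
  Real.sin θ * ((2 : ℝ) ^ (-s) * |Real.sin (θ / 2)| ^ (-s) - 1)

lemma coorbitalF_neg (s θ : ℝ) : coorbitalF s (-θ) = -coorbitalF s θ := by
  unfold coorbitalF
  rw [neg_div, Real.sin_neg, Real.sin_neg, abs_neg]
  ring

lemma coorbitalF_zero (s : ℝ) : coorbitalF s 0 = 0 := by
  simp [coorbitalF]

/-- closed form of `coorbitalF 3` on `(0, π)` -/
noncomputable def gAux (θ : ℝ) : ℝ :=
  Real.cos (θ / 2) / (4 * Real.sin (θ / 2) ^ 2) - Real.sin θ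

lemma coorbitalF_eq_gAux {θ : ℝ} (h1 : 0 < θ) (h2 : θ < π) :
    coorbitalF 3 θ = gAux θ := by
  have ht : 0 < Real.sin (θ / 2) :=
    Real.sin_pos_of_pos_of_lt_pi (by linarith) (by linarith [Real.pi_pos])
  have habs : |Real.sin (θ / 2)| = Real.sin (θ / 2) := abs_of_pos ht
  have h2r : (2 : ℝ) ^ (-(3:ℝ)) = 1 / 8 := by
    rw [Real.rpow_neg (by norm_num), show ((3:ℝ)) = ((3:ℕ):ℝ) by norm_num,
      Real.rpow_natCast]
    norm_num
  have hsr : Real.sin (θ / 2) ^ (-(3:ℝ)) = (Real.sin (θ / 2) ^ (3:ℕ))⁻¹ := by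
    rw [Real.rpow_neg ht.le, show ((3:ℝ)) = ((3:ℕ):ℝ) by norm_num, Real.rpow_natCast]
  have hsin : Real.sin θ = 2 * Real.sin (θ/2) * Real.cos (θ/2) := by
    rw [← Real.sin_two_mul]; ring_nf
  unfold coorbitalF gAux
  rw [habs, h2r, hsr, hsin]
  field_simp
  ring

/-- derivative of `coorbitalF 3` on `(0, π)` -/
noncomputable def fDer (θ : ℝ) : ℝ :=
  -(1 + Real.cos (θ / 2) ^ 2) / (8 * Real.sin (θ / 2) ^ 3) - Real.cos θ

lemma hasDerivAt_gAux {θ : ℝ} (h1 : 0 < θ) (h2 : θ < π) :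
    HasDerivAt gAux (fDer θ) θ := by
  have ht : 0 < Real.sin (θ / 2) :=
    Real.sin_pos_of_pos_of_lt_pi (by linarith) (by linarith [Real.pi_pos])
  have hhalf : HasDerivAt (fun x : ℝ => x / 2) (1 / 2) θ := by
    simpa using (hasDerivAt_id θ).div_const 2
  have hsin2 : HasDerivAt (fun x : ℝ => Real.sin (x / 2))
      (Real.cos (θ / 2) * (1 / 2)) θ := (Real.hasDerivAt_sin (θ/2)).comp (h := fun x : ℝ => x / 2) θ hhalf
  have hcos2 : HasDerivAt (fun x : ℝ => Real.cos (x / 2))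
      (-Real.sin (θ / 2) * (1 / 2)) θ := (Real.hasDerivAt_cos (θ/2)).comp (h := fun x : ℝ => x / 2) θ hhalf
  have hden : HasDerivAt (fun x : ℝ => 4 * Real.sin (x / 2) ^ 2)
      (4 * ((2 : ℕ) * Real.sin (θ / 2) ^ 1 * (Real.cos (θ / 2) * (1 / 2)))) θ :=
    (hsin2.pow 2).const_mul 4
  have hdenne : 4 * Real.sin (θ / 2) ^ 2 ≠ 0 := by positivity
  have hquot := hcos2.div hden hdenne
  have hg : HasDerivAt gAux _ θ :=
    hquot.sub (Real.hasDerivAt_sin θ)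
  convert hg using 1
  have hpyth := Real.sin_sq_add_cos_sq (θ / 2)
  unfold fDer
  field_simp
  linear_combination 8 * hpyth

lemma hasDerivAt_coorbitalF {θ : ℝ} (h1 : 0 < θ) (h2 : θ < π) :
    HasDerivAt (coorbitalF 3) (fDer θ) θ := by
  apply (hasDerivAt_gAux h1 h2).congr_of_eventuallyEq
  have hmem : Set.Ioo 0 π ∈ nhds θ := (isOpen_Ioo).mem_nhds ⟨h1, h2⟩
  filter_upwards [hmem] with x hx
  exact coorbitalF_eq_gAux hx.1 hx.2

lemma fDer_add_neg {x y : ℝ} (hx : 0 < x) (hy : 0 < y) (hxy : x + y ≤ π) :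
    fDer x + fDer y < 0 := by
  have hsx : 0 < Real.sin (x / 2) :=
    Real.sin_pos_of_pos_of_lt_pi (by linarith) (by linarith [Real.pi_pos])
  have hsy : 0 < Real.sin (y / 2) :=
    Real.sin_pos_of_pos_of_lt_pi (by linarith) (by linarith [Real.pi_pos])
  have hcc : Real.cos x + Real.cos y ≥ 0 := by
    have h1 : Real.cos y ≥ Real.cos (π - x) :=
      Real.cos_le_cos_of_nonneg_of_le_pi hy.le (by linarith) (by linarith)
    rw [Real.cos_pi_sub] at h1
    linarith
  have h1 : -(1 + Real.cos (x / 2) ^ 2) / (8 * Real.sin (x / 2) ^ 3) < 0 := by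
    apply div_neg_of_neg_of_pos
    · nlinarith [sq_nonneg (Real.cos (x/2))]
    · positivity
  have h2 : -(1 + Real.cos (y / 2) ^ 2) / (8 * Real.sin (y / 2) ^ 3) < 0 := by
    apply div_neg_of_neg_of_pos
    · nlinarith [sq_nonneg (Real.cos (y/2))]
    · positivity
  unfold fDer
  linarith

lemma coorbital_key_lt {u v w : ℝ} (hv : 0 < v) (hvu : v < u) (hw : 0 < w)
    (hsum : u + w + v ≤ π) :
    coorbitalF 3 u + coorbitalF 3 (u + w)
      < coorbitalF 3 v + coorbitalF 3 (v + w) := by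
  set Φ : ℝ → ℝ := fun t => coorbitalF 3 (v + t) - coorbitalF 3 (u + w - t)
    with hΦdef
  have hπ := Real.pi_pos
  have hD : ∀ t ∈ Set.Icc (0:ℝ) (u - v),
      HasDerivAt Φ (fDer (v + t) + fDer (u + w - t)) t := by
    intro t ht
    obtain ⟨ht0, ht1⟩ := ht
    have ha : HasDerivAt (fun t : ℝ => v + t) 1 t := by
      simpa using (hasDerivAt_id t).const_add v
    have hb : HasDerivAt (fun t : ℝ => u + w - t) (-1) t := by
      simpa using (hasDerivAt_id t).const_sub (u + w)
    have h1 : HasDerivAt (fun t : ℝ => coorbitalF 3 (v + t))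
        (fDer (v + t) * 1) t :=
      (hasDerivAt_coorbitalF (by linarith) (by linarith)).comp t ha
    have h2 : HasDerivAt (fun t : ℝ => coorbitalF 3 (u + w - t))
        (fDer (u + w - t) * (-1)) t :=
      (hasDerivAt_coorbitalF (by linarith) (by linarith)).comp t hb
    have : HasDerivAt
      (fun t => coorbitalF 3 (v + t) - coorbitalF 3 (u + w - t)) _ t := h1.sub h2
    simpa [hΦdef] using this.congr_deriv (by ring)
  have hanti : StrictAntiOn Φ (Set.Icc 0 (u - v)) := by
    apply strictAntiOn_of_deriv_neg (convex_Icc _ _)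
    · exact fun t ht => (hD t ht).continuousAt.continuousWithinAt
    · intro t ht
      rw [interior_Icc] at ht
      rw [(hD t (Set.Ioo_subset_Icc_self ht)).deriv]
      exact fDer_add_neg (by linarith [ht.1]) (by linarith [ht.2]) (by linarith)
  have h := hanti (Set.left_mem_Icc.2 (by linarith))
    (Set.right_mem_Icc.2 (by linarith)) (by linarith : (0:ℝ) < u - v)
  simp only [hΦdef] at h
  have e1 : v + (u - v) = u := by ring
  have e2 : u + w - (u - v) = v + w := by ring
  have e3 : u + w - 0 = u + w := by ring
  rw [e1, e2, add_zero, e3] at h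
  linarith

/-- Newtonian 1+4 coorbital problem (`s = 3`), convex configuration with
`−π/2 < θ₄ < θ₃ < 0 < θ₂ < θ₁` and `θ₁ − θ₄ ≤ π`.  If the masses satisfy
`m₁ = m₄ > 0`, `m₂ = m₃ > 0` and `F m = 0` (where `Fᵢⱼ = f₃(θᵢ − θⱼ)`),
then `θ₁ − θ₂ = θ₃ − θ₄`, i.e. the configuration is symmetric with respect
to an axis through the central mass. -/
theorem symmetric_masses_imply_symmetric_one_plus_four
    (θ₁ θ₂ θ₃ θ₄ : ℝ) (h₄ : -(π / 2) < θ₄) (h₄₃ : θ₄ < θ₃) (h₃ : θ₃ < 0)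
    (h₂ : 0 < θ₂) (h₂₁ : θ₂ < θ₁) (hconv : θ₁ - θ₄ ≤ π)
    (m : Fin 4 → ℝ) (hm14 : m 0 = m 3) (hm23 : m 1 = m 2)
    (hm1 : 0 < m 0) (hm2 : 0 < m 1)
    (hF : (Matrix.of fun i j : Fin 4 =>
        coorbitalF 3 (![θ₁, θ₂, θ₃, θ₄] i - ![θ₁, θ₂, θ₃, θ₄] j)).mulVec m = 0) :
    θ₁ - θ₂ = θ₃ - θ₄ := by
  set u := θ₁ - θ₂ with hu
  set w := θ₂ - θ₃ with hw0
  set v := θ₃ - θ₄ with hv0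
  have hu0 : 0 < u := by simp [hu]; linarith
  have hw : 0 < w := by simp [hw0]; linarith
  have hv : 0 < v := by simp [hv0]; linarith
  have hsum : u + w + v ≤ π := by simp [hu, hw0, hv0]; linarith
  have h0 := congrFun hF 0
  have h3 := congrFun hF 3
  simp [Matrix.mulVec, dotProduct, Fin.sum_univ_four, Matrix.of_apply,
    Matrix.cons_val_zero, Matrix.cons_val_one] at h0 h3
  -- rewrite all angle differences in terms of u, v, w
  have e12 : θ₁ - θ₂ = u := rfl
  have e13 : θ₁ - θ₃ = u + w := by rw [hu, hw0]; ring
  have e14 : θ₁ - θ₄ = u + w + v := by rw [hu, hw0, hv0]; ring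
  have e41 : θ₄ - θ₁ = -(u + w + v) := by rw [hu, hw0, hv0]; ring
  have e42 : θ₄ - θ₂ = -(w + v) := by rw [hw0, hv0]; ring
  have e43 : θ₄ - θ₃ = -v := by rw [hv0]; ring
  rw [e12, e13, e14] at h0
  rw [e41, e42, e43] at h3
  rw [coorbitalF_zero] at h0 h3
  rw [coorbitalF_neg, coorbitalF_neg, coorbitalF_neg] at h3
  -- key equation: f(u) + f(u+w) = f(v) + f(v+w)
  have hkey : coorbitalF 3 u + coorbitalF 3 (u + w)
      = coorbitalF 3 v + coorbitalF 3 (v + w) := by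
    have hb : (0:ℝ) < m 1 := hm2
    have hvw : w + v = v + w := by ring
    rw [← hm23, ← hm14] at h0 h3
    have hsum0 : m 1 * (coorbitalF 3 u + coorbitalF 3 (u + w)
        - coorbitalF 3 (w + v) - coorbitalF 3 v) = 0 := by linarith
    have := mul_eq_zero.1 hsum0
    rcases this with h | h
    · exact absurd h (ne_of_gt hb)
    · rw [hvw] at h; linarith
  rcases lt_trichotomy u v with hlt | heq | hgt
  · exact absurd hkey (ne_of_gt (coorbital_key_lt hu0 hlt hw (by linarith)))
  · linarith [heq]
  · exact absurd hkey (ne_of_lt (coorbital_key_lt hv hgt hw hsum))
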